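/- Let Y ∈ ℕ^{n×m} and M ∈ ℝ^{n×m}, and let F be the (nonempty) family of supports of all Kirchhoff matrices A for which some pair (D, A) is a linearly conjugate realization of (Y, M). Then: (i) F has a maximum element D₀ under inclusion (the support of the dense realization); (ii) for every R ∈ F and every pair e ∈ R, the subfamily {W ∈ F : W ⊆ R \ {e}} is either empty or has a maximum element; and consequently (iii) every member of F belongs to the smallest collection that contains D₀ and is closed under passing from a member R and a pair e ∈ R to the maximum of {W ∈ F : W ⊆ R \ {e}} whenever this subfamily is nonempty. Hence the iterative constrained-dense-realization procedure enumerates all reaction graph structures of linearly conjugate realizations. -/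

import Mathlib

/-- A Kirchhoff matrix: nonnegative off-diagonal entries, zero column sums. -/
def IsKirchhoff {m : ℕ} (A : Matrix (Fin m) (Fin m) ℝ) : Prop :=
  (∀ i j, i ≠ j → 0 ≤ A i j) ∧ ∀ j, ∑ i, A i j = 0

/-- The support (reaction graph structure) of a matrix: off-diagonal positive entries. -/
def kirchhoffSupport {m : ℕ} (A : Matrix (Fin m) (Fin m) ℝ) : Set (Fin m × Fin m) :=
  {p | p.1 ≠ p.2 ∧ 0 < A p.1 p.2}

/-- A linearly conjugate realization of (Y, M): D positive diagonal, A Kirchhoff, Y·A = D·M. -/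
def IsLinConjReal {n m : ℕ} (Y : Matrix (Fin n) (Fin m) ℕ) (M : Matrix (Fin n) (Fin m) ℝ)
    (D : Matrix (Fin n) (Fin n) ℝ) (A : Matrix (Fin m) (Fin m) ℝ) : Prop :=
  D.IsDiag ∧ (∀ i, 0 < D i i) ∧ IsKirchhoff A ∧
    (Y.map (Nat.cast : ℕ → ℝ)) * A = D * M

/-- The monomial map associated with Y. -/
def psi {n m : ℕ} (Y : Matrix (Fin n) (Fin m) ℕ) (x : Fin n → ℝ) : Fin m → ℝ :=
  fun j => ∏ i, x i ^ Y i j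

/-- A nonempty union-closed family of subsets of a finite type has a maximum. -/
lemma exists_max_of_unionClosed {α : Type*} [Finite α] (G : Set (Set α))
    (hne : G.Nonempty) (hu : ∀ a ∈ G, ∀ b ∈ G, a ∪ b ∈ G) :
    ∃ T ∈ G, ∀ S ∈ G, S ⊆ T := by
  obtain ⟨T, hT, hmax⟩ : ∃ T ∈ G, ∀ T' ∈ G, id T ≤ id T' → id T = id T' := by
    obtain ⟨T, hT, hm⟩ := Set.Finite.exists_maximalFor id G (Set.toFinite G) hne
    exact ⟨T, hT, fun T' hT' h => le_antisymm h (hm hT' h)⟩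
  refine ⟨T, hT, fun S hS => ?_⟩
  have h1 : S ∪ T ∈ G := hu S hS T hT
  have h2 : T = S ∪ T := hmax (S ∪ T) h1 Set.subset_union_right
  exact h2 ▸ Set.subset_union_left

theorem algorithm_enumerates_all_linConj_structures {n m : ℕ}
    (Y : Matrix (Fin n) (Fin m) ℕ) (M : Matrix (Fin n) (Fin m) ℝ)
    (F : Set (Set (Fin m × Fin m)))
    (hF : F = {S | ∃ D A, IsLinConjReal Y M D A ∧ kirchhoffSupport A = S})
    (hne : F.Nonempty) :
    ∃ D₀ ∈ F, (∀ S ∈ F, S ⊆ D₀) ∧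
      (∀ R ∈ F, ∀ e ∈ R,
        (∀ W ∈ F, ¬ W ⊆ R \ {e}) ∨
        (∃ W ∈ F, W ⊆ R \ {e} ∧ ∀ W' ∈ F, W' ⊆ R \ {e} → W' ⊆ W)) ∧
      (∀ P : Set (Set (Fin m × Fin m)), D₀ ∈ P →
        (∀ R ∈ P, ∀ e ∈ R, ∀ W ∈ F, W ⊆ R \ {e} →
          (∀ W' ∈ F, W' ⊆ R \ {e} → W' ⊆ W) → W ∈ P) →
        ∀ S ∈ F, S ∈ P) := by
  -- F is closed under unions
  have hu : ∀ a ∈ F, ∀ b ∈ F, a ∪ b ∈ F := by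
    intro a ha b hb
    rw [hF] at ha hb ⊢
    obtain ⟨D₁, A₁, ⟨hd₁, hp₁, ⟨hk₁n, hk₁s⟩, he₁⟩, hs₁⟩ := ha
    obtain ⟨D₂, A₂, ⟨hd₂, hp₂, ⟨hk₂n, hk₂s⟩, he₂⟩, hs₂⟩ := hb
    refine ⟨D₁ + D₂, A₁ + A₂, ⟨hd₁.add hd₂, fun i => ?_, ⟨fun i j h => ?_, fun j => ?_⟩, ?_⟩, ?_⟩
    · exact add_pos (hp₁ i) (hp₂ i)
    · exact add_nonneg (hk₁n i j h) (hk₂n i j h)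
    · simp [Matrix.add_apply, Finset.sum_add_distrib, hk₁s j, hk₂s j]
    · rw [Matrix.mul_add, Matrix.add_mul, he₁, he₂]
    · subst hs₁ hs₂
      ext p
      simp only [kirchhoffSupport, Set.mem_setOf_eq, Set.mem_union, Matrix.add_apply]
      constructor
      · rintro ⟨hne', hpos⟩
        by_cases h1 : 0 < A₁ p.1 p.2
        · exact Or.inl ⟨hne', h1⟩
        · exact Or.inr ⟨hne', by push_neg at h1; linarith⟩
      · rintro (⟨hne', h1⟩ | ⟨hne', h2⟩)
        · exact ⟨hne', by have := hk₂n p.1 p.2 hne'; linarith⟩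
        · exact ⟨hne', by have := hk₁n p.1 p.2 hne'; linarith⟩
  obtain ⟨D₀, hD₀, hmax⟩ := exists_max_of_unionClosed F hne hu
  refine ⟨D₀, hD₀, hmax, fun R _ e _ => ?_, ?_⟩
  · -- subfamily has a maximum if nonempty
    by_cases hsub : ∃ W ∈ F, W ⊆ R \ {e}
    · right
      obtain ⟨T, ⟨hTF, hTs⟩, hTmax⟩ := exists_max_of_unionClosed
        {W | W ∈ F ∧ W ⊆ R \ {e}}
        (by obtain ⟨W, hW, hWs⟩ := hsub; exact ⟨W, hW, hWs⟩)
        (fun a ⟨haF, has⟩ b ⟨hbF, hbs⟩ => ⟨hu a haF b hbF, Set.union_subset has hbs⟩)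
      exact ⟨T, hTF, hTs, fun W' hW' hW's => hTmax W' ⟨hW', hW's⟩⟩
    · left
      push_neg at hsub
      exact hsub
  · intro P hP₀ hPstep S hS
    -- induction on cardinality of R
    have key : ∀ k : ℕ, ∀ R ∈ F, R ∈ P → S ⊆ R → R.ncard ≤ k → S ∈ P := by
      intro k
      induction k with
      | zero =>
        intro R _ hRP hSR hcard
        have hRfin : R.Finite := Set.toFinite R
        have : R = ∅ := by
          rw [← Set.ncard_eq_zero hRfin]; omega
        subst this
        have : S = ∅ := Set.subset_empty_iff.mp hSR
        rwa [this]
      | succ k ih =>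
        intro R hRF hRP hSR hcard
        by_cases hSeq : S = R
        · rwa [hSeq]
        · obtain ⟨e, heR, heS⟩ : ∃ e ∈ R, e ∉ S := by
            by_contra h
            push_neg at h
            exact hSeq (Set.Subset.antisymm hSR h)
          have hSsub : S ⊆ R \ {e} := fun x hx =>
            ⟨hSR hx, fun hxe => heS (by rwa [Set.mem_singleton_iff.mp hxe] at hx)⟩
          obtain ⟨T, ⟨hTF, hTs⟩, hTmax⟩ := exists_max_of_unionClosed
            {W | W ∈ F ∧ W ⊆ R \ {e}} ⟨S, hS, hSsub⟩
            (fun a ⟨haF, has⟩ b ⟨hbF, hbs⟩ => ⟨hu a haF b hbF, Set.union_subset has hbs⟩)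
          have hTP : T ∈ P := hPstep R hRP e heR T hTF hTs
            (fun W' hW' hW's => hTmax W' ⟨hW', hW's⟩)
          have hST : S ⊆ T := hTmax S ⟨hS, hSsub⟩
          have hTlt : T.ncard < R.ncard := by
            apply Set.ncard_lt_ncard _ (Set.toFinite R)
            refine ⟨hTs.trans Set.diff_subset, fun h => ?_⟩
            have := hTs (h heR)
            exact this.2 rfl
          exact ih T hTF hTP hST (by omega)
    exact key D₀.ncard D₀ hD₀ hP₀ (hmax S hS) le_rfl
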